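/- arXiv:cs/0606091 — 4 statements merged into one kernel-verified Lean document; each statement's English description precedes it below -/
import Mathlib

section
/- Let (W, ⊑) be a WQO, let Φ : (2^W)^m → 2^W be monotone (in each argument), and let g₁, …, g_m : 2^W → 2^W be monotone functions whose values are always upward-closed sets. Define F(V) = Φ(g₁(V), …, g_m(V)) and the approximants M₀ = ∅, M_{i+1} = F(M_i). Then there exists k such that M_k = M_{k+1} = lfp(F); in particular the least fixpoint of F is reached after finitely many iterations. -/
def IsWQO (W : Type*) [Preorder W] : Prop :=
  ∀ f : ℕ → W, ∃ i j : ℕ, i < j ∧ f i ≤ f j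

def UpClosed {W : Type*} [Preorder W] (V : Set W) : Prop :=
  ∀ ⦃v w : W⦄, v ∈ V → v ≤ w → w ∈ V

/-- An increasing chain of upward-closed sets over a WQO stabilizes. -/
lemma upclosed_chain_stab {W : Type*} [Preorder W] (hwqo : IsWQO W)
    (U : ℕ → Set W) (hmono : Monotone U) (hup : ∀ i, UpClosed (U i)) :
    ∃ k, ∀ i, k ≤ i → U i = U k := by
  by_contra hcon
  push_neg at hcon
  have h : ∀ k, ∃ p : ℕ × W, k < p.1 ∧ p.2 ∈ U p.1 ∧ p.2 ∉ U k := by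
    intro k
    obtain ⟨i, hki, hne⟩ := hcon k
    have hsub : U k ⊆ U i := hmono hki
    have : ¬ U i ⊆ U k := fun hsub' => hne (le_antisymm hsub' hsub)
    obtain ⟨x, hx, hx'⟩ := Set.not_subset.mp this
    exact ⟨(i, x), lt_of_le_of_ne hki (fun h => hne (by rw [h]) : k ≠ i), hx, hx'⟩
  choose c hc1 hc2 hc3 using h
  let n : ℕ → ℕ := fun i => Nat.rec 0 (fun _ k => (c k).1) i
  have hn : ∀ i, n (i + 1) = (c (n i)).1 := fun i => rfl
  have hnlt : ∀ i, n i < n (i + 1) := fun i => by rw [hn]; exact hc1 (n i)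
  have hnmono : StrictMono n := strictMono_nat_of_lt_succ hnlt
  set x : ℕ → W := fun i => (c (n i)).2 with hx
  obtain ⟨i, j, hij, hle⟩ := hwqo x
  have h1 : x i ∈ U (n (i + 1)) := by rw [hn]; exact hc2 (n i)
  have h2 : x j ∉ U (n j) := hc3 (n j)
  have h3 : U (n (i + 1)) ⊆ U (n j) := hmono (hnmono.le_iff_le.mpr hij)
  exact h2 (hup (n j) (h3 h1) hle)

/-- Finite convergence of approximants for upward-guarded least fixpoints. -/
theorem lfp_finite_convergence {W : Type*} [Preorder W] (hwqo : IsWQO W)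
    {m : ℕ} (Φ : (Fin m → Set W) → Set W) (hΦ : Monotone Φ)
    (g : Fin m → Set W → Set W) (hg : ∀ j, Monotone (g j))
    (hgup : ∀ j V, UpClosed (g j V))
    (F : Set W → Set W) (hF : ∀ V, F V = Φ (fun j => g j V))
    (M : ℕ → Set W) (hM0 : M 0 = ∅) (hMs : ∀ i, M (i + 1) = F (M i)) :
    ∃ k : ℕ, M (k + 1) = M k ∧ IsLeast {V : Set W | F V = V} (M k) := by
  have hFmono : Monotone F := by
    intro A B hAB
    rw [hF, hF]
    exact hΦ (fun j => hg j hAB)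
  have hMstep : ∀ i, M i ⊆ M (i + 1) := by
    intro i
    induction i with
    | zero => rw [hM0]; exact Set.empty_subset _
    | succ n ih => rw [hMs n, hMs (n + 1)]; exact hFmono ih
  have hMmono : Monotone M := monotone_nat_of_le_succ hMstep
  -- for each j, the chain i ↦ g j (M i) stabilizes
  have hstab : ∀ j : Fin m, ∃ k, ∀ i, k ≤ i → g j (M i) = g j (M k) :=
    fun j => upclosed_chain_stab hwqo (fun i => g j (M i))
      (fun a b hab => hg j (hMmono hab)) (fun i => hgup j (M i))
  choose k hk using hstab
  -- uniform bound
  obtain ⟨K, hK⟩ : ∃ K, ∀ j, k j ≤ K := by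
    rcases m with _ | m'
    · exact ⟨0, fun j => j.elim0⟩
    · exact ⟨Finset.univ.sup k, fun j => Finset.le_sup (Finset.mem_univ j)⟩
  have hgeq : ∀ j : Fin m, g j (M (K + 1)) = g j (M K) := by
    intro j
    rw [hk j (K + 1) (le_trans (hK j) (Nat.le_succ K)), hk j K (hK j)]
  have hfix : M (K + 2) = M (K + 1) := by
    rw [hMs (K + 1), hF]
    have : (fun j => g j (M (K + 1))) = fun j => g j (M K) := funext hgeq
    rw [this, ← hF, ← hMs K]
  refine ⟨K + 1, hfix, ?_, ?_⟩
  · show F (M (K + 1)) = M (K + 1)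
    rw [← hMs (K + 1)]; exact hfix
  · intro V hV
    have : ∀ i, M i ⊆ V := by
      intro i
      induction i with
      | zero => rw [hM0]; exact Set.empty_subset _
      | succ n ih =>
        rw [hMs n]
        calc F (M n) ⊆ F V := hFmono ih
          _ = V := hV
    exact this (K + 1)
end

section
/- Let (W, ⊑) be a WQO, let Φ : (2^W)^m → 2^W be monotone, and let g₁, …, g_m : 2^W → 2^W be monotone functions whose values are always downward-closed sets. Define F(V) = Φ(g₁(V), …, g_m(V)) and the approximants N₀ = W, N_{i+1} = F(N_i). Then there exists k such that N_k = N_{k+1} = gfp(F); the greatest fixpoint of F is reached after finitely many iterations. -/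
def DownClosed {W : Type*} [Preorder W] (V : Set W) : Prop :=
  ∀ ⦃v w : W⦄, w ∈ V → v ≤ w → v ∈ V

/-- A decreasing sequence of downward-closed sets in a WQO is eventually constant. -/
lemma downclosed_antitone_stabilizes {W : Type*} [Preorder W] (hwqo : IsWQO W)
    (D : ℕ → Set W) (hanti : Antitone D) (hdn : ∀ i, DownClosed (D i)) :
    ∃ n, ∀ i, n ≤ i → D i = D n := by
  by_contra h
  push_neg at h
  choose f hf hne using h
  -- build a strictly decreasing subsequence
  let k : ℕ → ℕ := fun s => Nat.rec 0 (fun _ prev => f prev) s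
  have hk0 : k 0 = 0 := rfl
  have hks : ∀ s, k (s + 1) = f (k s) := fun s => rfl
  have hkmono : Monotone k := by
    apply monotone_nat_of_le_succ
    intro s
    rw [hks]
    exact hf (k s)
  have hstrict : ∀ s, D (k (s + 1)) ⊂ D (k s) := by
    intro s
    rw [hks]
    exact lt_of_le_of_ne (hanti (hf (k s))) (hne (k s))
  have hne' : ∀ s, ∃ w, w ∈ D (k s) ∧ w ∉ D (k (s + 1)) := by
    intro s
    obtain ⟨w, hw1, hw2⟩ := Set.exists_of_ssubset (hstrict s)
    exact ⟨w, hw1, hw2⟩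
  choose w hw1 hw2 using hne'
  obtain ⟨i, j, hij, hle⟩ := hwqo w
  have : w j ∈ D (k (i + 1)) := hanti (hkmono hij) (hw1 j)
  exact hw2 i (hdn _ this hle)

/-- Finite convergence of approximants for downward-guarded greatest fixpoints:
if `F(V) = Φ(g₁(V), …, g_m(V))` where `Φ` and the `gⱼ` are monotone and each `gⱼ`
only takes downward-closed values, then the iteration `N₀ = W`, `N_{i+1} = F(N_i)`
stabilizes at the greatest fixpoint of `F` after finitely many steps. -/
theorem gfp_finite_convergence {W : Type*} [Preorder W] (hwqo : IsWQO W)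
    {m : ℕ} (Φ : (Fin m → Set W) → Set W) (hΦ : Monotone Φ)
    (g : Fin m → Set W → Set W) (hg : ∀ j, Monotone (g j))
    (hgdn : ∀ j V, DownClosed (g j V))
    (F : Set W → Set W) (hF : ∀ V, F V = Φ (fun j => g j V))
    (N : ℕ → Set W) (hN0 : N 0 = Set.univ) (hNs : ∀ i, N (i + 1) = F (N i)) :
    ∃ k : ℕ, N (k + 1) = N k ∧ IsGreatest {V : Set W | F V = V} (N k) := by
  have hFmono : Monotone F := by
    intro A B hAB
    rw [hF, hF]
    exact hΦ (fun j => hg j hAB)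
  have hNanti : Antitone N := by
    apply antitone_nat_of_succ_le
    intro i
    induction i with
    | zero => rw [hN0]; exact Set.subset_univ _
    | succ i ih =>
      calc N (i + 1 + 1) = F (N (i + 1)) := hNs _
        _ ≤ F (N i) := hFmono ih
        _ = N (i + 1) := (hNs i).symm
  -- each component sequence stabilizes
  have hstab : ∀ j : Fin m, ∃ n, ∀ i, n ≤ i → g j (N i) = g j (N n) := by
    intro j
    exact downclosed_antitone_stabilizes hwqo (fun i => g j (N i))
      (fun a b hab => hg j (hNanti hab)) (fun i => hgdn j (N i))
  choose n hn using hstab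
  set K : ℕ := Finset.univ.sup n with hK
  have hKle : ∀ j, n j ≤ K := fun j => Finset.le_sup (Finset.mem_univ j)
  have hfix : N (K + 2) = N (K + 1) := by
    have heq : (fun j => g j (N (K + 1))) = fun j => g j (N K) := by
      funext j
      rw [hn j (K + 1) (le_trans (hKle j) (Nat.le_succ K)), hn j K (hKle j)]
    rw [hNs (K + 1), hF, heq, ← hF, ← hNs K]
  refine ⟨K + 1, hfix, ?_, ?_⟩
  · show F (N (K + 1)) = N (K + 1)
    rw [← hNs (K + 1)]; exact hfix
  · intro V hV
    have : ∀ i, V ⊆ N i := by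
      intro i
      induction i with
      | zero => rw [hN0]; exact Set.subset_univ _
      | succ i ih =>
        rw [hNs i, ← hV]
        exact hFmono ih
    exact this (K + 1)
end

section
/- Let (W, ⊑) be a WQO and F : 2^W → 2^W a monotone function such that F(V) = F(C↑(V)) for all V ⊆ W. Then the least fixpoint of the function V ↦ S ∪ F(V) (for any fixed S ⊆ W) is reached in finitely many iterations starting from ∅. -/
def Cup {W : Type*} [Preorder W] (V : Set W) : Set W := {w | ∃ v ∈ V, v ≤ w}

lemma Cup_mono {W : Type*} [Preorder W] {A B : Set W} (h : A ⊆ B) : Cup A ⊆ Cup B := by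
  rintro w ⟨v, hv, hle⟩; exact ⟨v, h hv, hle⟩

lemma Cup_upward {W : Type*} [Preorder W] {V : Set W} {a b : W}
    (ha : a ∈ Cup V) (hab : a ≤ b) : b ∈ Cup V := by
  obtain ⟨v, hv, hle⟩ := ha; exact ⟨v, hv, hle.trans hab⟩

/-- If `F` is monotone and insensitive to upward closure (`F(V) = F(C↑(V))`),
then for any `S` the least fixpoint of `V ↦ S ∪ F(V)` is reached in finitely many
iterations starting from `∅`. -/
theorem prestar_finite_convergence {W : Type*} [Preorder W] (hwqo : IsWQO W)
    (F : Set W → Set W) (hF : Monotone F) (hFC : ∀ V, F V = F (Cup V))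
    (S : Set W) (M : ℕ → Set W) (hM0 : M 0 = ∅)
    (hMs : ∀ i, M (i + 1) = S ∪ F (M i)) :
    ∃ k : ℕ, M (k + 1) = M k ∧ IsLeast {V : Set W | S ∪ F V = V} (M k) := by
  have hmono : ∀ i, M i ⊆ M (i + 1) := by
    intro i
    induction i with
    | zero => rw [hM0]; exact Set.empty_subset _
    | succ n ih =>
      rw [hMs n, hMs (n+1)]
      exact Set.union_subset_union_right S (hF ih)
  have hmono' : ∀ {i j : ℕ}, i ≤ j → M i ⊆ M j := by
    intro i j hij
    induction hij with
    | refl => exact subset_rfl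
    | step h ih => exact ih.trans (hmono _)
  -- the chain Cup (M i) stabilizes
  have hstab : ∃ k, Cup (M (k + 1)) = Cup (M k) := by
    by_contra h
    push_neg at h
    have hex : ∀ i, ∃ w, w ∈ Cup (M (i + 1)) ∧ w ∉ Cup (M i) := by
      intro i
      by_contra hc
      push_neg at hc
      exact h i (Set.Subset.antisymm (fun w hw => hc w hw) (Cup_mono (hmono i)))
    choose w hw1 hw2 using hex
    obtain ⟨i, j, hij, hle⟩ := hwqo w
    have : w i ∈ Cup (M j) := Cup_mono (hmono' hij) (hw1 i)
    exact hw2 j (Cup_upward this hle)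
  obtain ⟨k, hk⟩ := hstab
  have heq : M (k + 1 + 1) = M (k + 1) := by
    rw [hMs (k+1), hFC (M (k+1)), hk, ← hFC, ← hMs]
  refine ⟨k + 1, heq, ?_⟩
  · have hfix : S ∪ F (M (k+1)) = M (k+1) := by rw [← hMs]; exact heq
    refine ⟨hfix, ?_⟩
    intro V hV
    have : ∀ i, M i ⊆ V := by
      intro i
      induction i with
      | zero => rw [hM0]; exact Set.empty_subset _
      | succ n ih =>
        rw [hMs n]
        calc S ∪ F (M n) ⊆ S ∪ F V := Set.union_subset_union_right S (hF ih)
        _ = V := hV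
    exact this (k+1)
end

section
/- Let (W, ⊑) be a WQO and let F : 2^W → 2^W be defined by F(X) = V₂ ∩ (G(K↓(X)) ∪ V₁) where G : 2^W → 2^W is monotone and V₁, V₂ ⊆ W are fixed. Then the greatest fixpoint of F is reached after finitely many iterations from W: there is k with N_k = N_{k+1} = gfp(F), where N₀ = W and N_{i+1} = F(N_i). -/
def Kdn {W : Type*} [Preorder W] (V : Set W) : Set W := {w | ∀ x, x ≤ w → x ∈ V}

/-- The greatest fixpoint of `F(X) = V₂ ∩ (G(K↓(X)) ∪ V₁)` over a WQO is reached
after finitely many iterations from `W`. -/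
theorem safety_gfp_finite_convergence {W : Type*} [Preorder W] (hwqo : IsWQO W)
    (G : Set W → Set W) (hG : Monotone G) (V₁ V₂ : Set W)
    (F : Set W → Set W) (hF : ∀ X, F X = V₂ ∩ (G (Kdn X) ∪ V₁))
    (N : ℕ → Set W) (hN0 : N 0 = Set.univ) (hNs : ∀ i, N (i + 1) = F (N i)) :
    ∃ k : ℕ, N (k + 1) = N k ∧ IsGreatest {X : Set W | F X = X} (N k) := by
  have hKmono : Monotone (Kdn (W := W)) := fun A B h w hw x hx => h (hw x hx)
  have hKdc : ∀ (V : Set W) (x y : W), x ≤ y → y ∈ Kdn V → x ∈ Kdn V :=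
    fun V x y hxy hy z hz => hy z (hz.trans hxy)
  have hFmono : Monotone F := by
    intro A B h
    rw [hF, hF]
    exact Set.inter_subset_inter_right _ (Set.union_subset_union_left _ (hG (hKmono h)))
  have hdec : ∀ i, N (i + 1) ⊆ N i := by
    intro i
    induction i with
    | zero => rw [hN0]; exact Set.subset_univ _
    | succ n ih =>
      have h2 : F (N (n + 1)) ⊆ F (N n) := hFmono ih
      rw [← hNs (n + 1), ← hNs n] at h2
      exact h2
  have hanti : Antitone N := antitone_nat_of_succ_le hdec
  have hK : ∃ k, Kdn (N (k + 1)) = Kdn (N k) := by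
    by_contra h
    push_neg at h
    have hstrict : ∀ i, ∃ w, w ∈ Kdn (N i) ∧ w ∉ Kdn (N (i + 1)) := by
      intro i
      by_contra hc
      push_neg at hc
      exact h i (Set.Subset.antisymm (hKmono (hdec i)) (fun w hw => hc w hw))
    choose f hf1 hf2 using hstrict
    obtain ⟨i, j, hij, hle⟩ := hwqo f
    have hji : Kdn (N j) ⊆ Kdn (N (i + 1)) := hKmono (hanti hij)
    exact hf2 i (hKdc _ _ _ hle (hji (hf1 j)))
  obtain ⟨k', hk'⟩ := hK
  have h1 : F (N (k' + 1)) = F (N k') := by rw [hF, hF, hk']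
  refine ⟨k' + 1, ?_, ?_, ?_⟩
  · rw [hNs (k' + 1), h1, ← hNs k']
  · show F (N (k' + 1)) = N (k' + 1)
    rw [h1, ← hNs k']
  · intro X hX
    have hall : ∀ i, X ⊆ N i := by
      intro i
      induction i with
      | zero => rw [hN0]; exact Set.subset_univ _
      | succ n ih => rw [hNs n, ← hX]; exact hFmono ih
    exact hall _
end
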